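/- Let (r_n) be positive reals with ∑_n r_n^d = ∞, and let (ω_n) be i.i.d. uniform points in [0,1]^d. Then almost surely the set E = limsup_n B(ω_n, r_n) has full Lebesgue measure in [0,1]^d. -/

import Mathlib

open MeasureTheory Metric Set Filter

lemma cube_ball_lower (d : ℕ) (hd : 0 < d) (x : EuclideanSpace ℝ (Fin d))
    (hx : ∀ i, x i ∈ Set.Icc (0:ℝ) 1) (ρ : ℝ) (hρ : 0 < ρ) :
    ENNReal.ofReal ((min ρ 1 / (2 * Real.sqrt d)) ^ d)
      ≤ volume (ball x ρ ∩ {y : EuclideanSpace ℝ (Fin d) | ∀ i, y i ∈ Set.Icc (0:ℝ) 1}) := by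
  have hd1 : (1:ℝ) ≤ (d:ℝ) := by exact_mod_cast hd
  have hsd : (1:ℝ) ≤ Real.sqrt d := by
    rw [show (1:ℝ) = Real.sqrt 1 from (Real.sqrt_one).symm]
    exact Real.sqrt_le_sqrt hd1
  have hsd0 : (0:ℝ) < Real.sqrt d := lt_of_lt_of_le one_pos hsd
  set s : ℝ := min ρ 1 / (2 * Real.sqrt d) with hs_def
  have hmin0 : 0 < min ρ 1 := lt_min hρ one_pos
  have hs0 : 0 < s := div_pos hmin0 (by positivity)
  have hs1 : s ≤ 1 := by
    rw [div_le_one (by positivity)]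
    calc min ρ 1 ≤ 1 := min_le_right _ _
    _ ≤ 2 * Real.sqrt d := by nlinarith
  set a : Fin d → ℝ := fun i => min (x i) (1 - s) with ha_def
  set B : Set (EuclideanSpace ℝ (Fin d)) :=
    (MeasurableEquiv.toLp 2 (Fin d → ℝ)).symm ⁻¹' (Set.univ.pi fun i => Set.Icc (a i) (a i + s))
    with hB_def
  have hmemB : ∀ y : EuclideanSpace ℝ (Fin d), y ∈ B ↔ ∀ i, y i ∈ Set.Icc (a i) (a i + s) := by
    intro y
    simp only [hB_def, Set.mem_preimage, Set.mem_univ_pi]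
    exact Iff.rfl
  have haux : ∀ i, a i ∈ Set.Icc (0:ℝ) (1 - s) ∧ a i ≤ x i ∧ x i ≤ a i + s := by
    intro i
    obtain ⟨h0, h1⟩ := hx i
    refine ⟨⟨le_min h0 (by linarith), min_le_right _ _⟩, min_le_left _ _, ?_⟩
    rcases le_total (x i) (1 - s) with h | h
    · have hai : a i = x i := min_eq_left h
      rw [hai]; linarith
    · have hai : a i = 1 - s := min_eq_right h
      rw [hai]; linarith
  have hBsub : B ⊆ ball x ρ ∩ {y : EuclideanSpace ℝ (Fin d) | ∀ i, y i ∈ Set.Icc (0:ℝ) 1} := by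
    intro y hy
    rw [hmemB] at hy
    constructor
    · rw [mem_ball, EuclideanSpace.dist_eq]
      have hsum : ∑ i, dist (y i) (x i) ^ 2 ≤ (d:ℝ) * s ^ 2 := by
        calc ∑ i, dist (y i) (x i) ^ 2 ≤ ∑ _i : Fin d, s ^ 2 := by
              refine Finset.sum_le_sum fun i _ => ?_
              obtain ⟨hy1, hy2⟩ := hy i
              obtain ⟨_, hax, hxa⟩ := haux i
              rw [Real.dist_eq, sq_abs]
              exact sq_le_sq' (by linarith) (by linarith)
          _ = (d:ℝ) * s ^ 2 := by rw [Finset.sum_const, Finset.card_univ, Fintype.card_fin, nsmul_eq_mul]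
      calc Real.sqrt (∑ i, dist (y i) (x i) ^ 2) ≤ Real.sqrt ((d:ℝ) * s ^ 2) :=
            Real.sqrt_le_sqrt hsum
        _ = Real.sqrt d * s := by
            rw [Real.sqrt_mul (by positivity), Real.sqrt_sq hs0.le]
        _ = min ρ 1 / 2 := by
            rw [hs_def]
            field_simp
        _ < min ρ 1 := by linarith
        _ ≤ ρ := min_le_left _ _
    · intro i
      obtain ⟨⟨h0, h1⟩, _, _⟩ := haux i
      obtain ⟨hy1, hy2⟩ := hy i
      exact ⟨by linarith, by linarith⟩
  have hvolB : volume B = ENNReal.ofReal (s ^ d) := by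
    rw [hB_def, (EuclideanSpace.volume_preserving_symm_measurableEquiv_toLp (Fin d)).measure_preimage
      (MeasurableSet.univ_pi fun i => measurableSet_Icc).nullMeasurableSet]
    rw [volume_pi_pi]
    simp only [Real.volume_Icc, add_sub_cancel_left]
    rw [Finset.prod_const, Finset.card_univ, Fintype.card_fin,
      ← ENNReal.ofReal_pow hs0.le]
  calc ENNReal.ofReal (s ^ d) = volume B := hvolB.symm
    _ ≤ _ := measure_mono hBsub

lemma div_aux (d : ℕ) (hd : 0 < d) (r : ℕ → ℝ) (hr : ∀ n, 0 < r n)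
    (hdiv : ¬ Summable fun n => r n ^ (d : ℝ)) :
    ∑' n, ENNReal.ofReal ((min (r n) 1 / (2 * Real.sqrt d)) ^ d) = ⊤ := by
  have hc0 : (0:ℝ) < 2 * Real.sqrt d := by
    have : (0:ℝ) < Real.sqrt d := Real.sqrt_pos.2 (by exact_mod_cast hd)
    linarith
  have hdiv' : ¬ Summable fun n => r n ^ d := by
    intro h; exact hdiv (h.congr fun n => (Real.rpow_natCast (r n) d).symm)
  have hmin : ¬ Summable fun n => (min (r n) 1) ^ d := by
    intro h
    have h0 : Tendsto (fun n => (min (r n) 1) ^ d) atTop (nhds 0) := h.tendsto_atTop_zero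
    have hev : ∀ᶠ n in atTop, (min (r n) 1) ^ d = r n ^ d := by
      filter_upwards [h0.eventually_lt_const one_pos] with n hn
      rcases le_total (r n) 1 with h1 | h1
      · rw [min_eq_left h1]
      · exfalso; rw [min_eq_right h1] at hn; simp at hn
    obtain ⟨N, hN⟩ := eventually_atTop.1 hev
    apply hdiv'
    rw [← summable_nat_add_iff N]
    exact ((summable_nat_add_iff N).2 h).congr fun n => hN (n + N) (Nat.le_add_left _ _)
  have hsum : ¬ Summable fun n => (min (r n) 1 / (2 * Real.sqrt d)) ^ d := by
    intro h
    apply hmin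
    have h2 := h.mul_left ((2 * Real.sqrt d) ^ d)
    refine h2.congr fun n => ?_
    rw [div_pow]
    field_simp
  by_contra h
  apply hsum
  refine (ENNReal.summable_toReal h).congr fun n => ?_
  refine ENNReal.toReal_ofReal ?_
  have h1 : (0:ℝ) ≤ min (r n) 1 := le_min (hr n).le zero_le_one
  positivity


theorem limsup_full_measure_of_divergence
    (d : ℕ) (hd : 0 < d)
    (r : ℕ → ℝ) (hr : ∀ n, 0 < r n)
    (hdiv : ¬ Summable fun n => r n ^ (d : ℝ))
    (cube : Set (EuclideanSpace ℝ (Fin d)))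
    (hcube : cube = {x | ∀ i, x i ∈ Set.Icc (0:ℝ) 1})
    (μ : Measure (EuclideanSpace ℝ (Fin d))) (hμ : μ = volume.restrict cube)
    (P : Measure (ℕ → EuclideanSpace ℝ (Fin d))) [IsProbabilityMeasure P]
    (hP : ∀ (s : Finset ℕ) (A : ℕ → Set (EuclideanSpace ℝ (Fin d))),
      (∀ n, MeasurableSet (A n)) →
      P {ω | ∀ n ∈ s, ω n ∈ A n} = ∏ n ∈ s, μ (A n))
    (E : (ℕ → EuclideanSpace ℝ (Fin d)) → Set (EuclideanSpace ℝ (Fin d)))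
    (hE : ∀ ω, E ω = ⋂ N, ⋃ n, ⋃ (_ : N ≤ n), ball (ω n) (r n)) :
    ∀ᵐ ω ∂P, volume (cube \ E ω) = 0 := by
  classical
  subst hμ
  subst hcube
  set cube : Set (EuclideanSpace ℝ (Fin d)) := {x | ∀ i, x i ∈ Set.Icc (0:ℝ) 1} with hcube
  have hproj : ∀ i, Measurable fun x : EuclideanSpace ℝ (Fin d) => x i := fun i =>
    (measurable_pi_apply i).comp (MeasurableEquiv.toLp 2 (Fin d → ℝ)).symm.measurable
  have hcubeMeas : MeasurableSet cube := by
    have h : cube = ⋂ i, (fun x : EuclideanSpace ℝ (Fin d) => x i) ⁻¹' Set.Icc (0:ℝ) 1 := by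
      ext y; simp [hcube]
    rw [h]
    exact MeasurableSet.iInter fun i => (hproj i) measurableSet_Icc
  set S : EuclideanSpace ℝ (Fin d) → ℕ → Set (ℕ → EuclideanSpace ℝ (Fin d)) :=
    fun x n => (fun ω => ω n) ⁻¹' ball x (r n) with hS
  have hSmeas : ∀ x n, MeasurableSet (S x n) := fun x n =>
    (measurable_pi_apply n) measurableSet_ball
  have hPS : ∀ x n, P (S x n) = (volume.restrict cube) (ball x (r n)) := by
    intro x n
    have h := hP {n} (fun m => ball x (r m)) (fun m => measurableSet_ball)
    simpa [hS, Set.preimage] using h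
  have hindep : ∀ x, ProbabilityTheory.iIndepSet (S x) P := by
    intro x
    rw [ProbabilityTheory.iIndepSet_iff_meas_biInter (hSmeas x)]
    intro t
    have h1 := hP t (fun m => ball x (r m)) (fun m => measurableSet_ball)
    have h2 : ⋂ n ∈ t, S x n = {ω | ∀ n ∈ t, ω n ∈ ball x (r n)} := by
      ext ω; simp [hS]
    rw [h2, h1]
    exact Finset.prod_congr rfl fun n _ => (hPS x n).symm
  have hElim : ∀ x, {ω | x ∈ E ω} = Filter.limsup (S x) Filter.atTop := by
    intro x
    rw [Filter.limsup_eq_iInf_iSup_of_nat]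
    ext ω
    simp [hE, hS, Set.iInf_eq_iInter, Set.iSup_eq_iUnion, mem_ball, dist_comm]
  have hfull : ∀ x ∈ cube, P {ω | x ∈ E ω} = 1 := by
    intro x hx
    rw [hElim x]
    refine ProbabilityTheory.measure_limsup_eq_one (hSmeas x) (hindep x) ?_
    rw [eq_top_iff, ← div_aux d hd r hr hdiv]
    refine ENNReal.tsum_le_tsum fun n => ?_
    rw [hPS x n, Measure.restrict_apply measurableSet_ball]
    exact cube_ball_lower d hd x hx (r n) (hr n)
  have hEmeasSet : ∀ ω, MeasurableSet (E ω) := by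
    intro ω; rw [hE]
    exact MeasurableSet.iInter fun N => MeasurableSet.iUnion fun n =>
      MeasurableSet.iUnion fun _ => measurableSet_ball
  have hxEmeas : ∀ x, MeasurableSet {ω | x ∈ E ω} := by
    intro x
    rw [hElim x, Filter.limsup_eq_iInf_iSup_of_nat]
    simp only [Set.iInf_eq_iInter, Set.iSup_eq_iUnion]
    exact MeasurableSet.iInter fun N => MeasurableSet.iUnion fun n =>
      MeasurableSet.iUnion fun _ => hSmeas x n
  set G : Set ((ℕ → EuclideanSpace ℝ (Fin d)) × EuclideanSpace ℝ (Fin d)) :=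
    {p | p.2 ∈ E p.1} with hG
  have hGmeas : MeasurableSet G := by
    have h : G = ⋂ N, ⋃ n, ⋃ _ : N ≤ n,
        {p : (ℕ → EuclideanSpace ℝ (Fin d)) × EuclideanSpace ℝ (Fin d) | dist p.2 (p.1 n) < r n} := by
      ext p; simp [hG, hE, mem_ball]
    rw [h]
    refine MeasurableSet.iInter fun N => MeasurableSet.iUnion fun n =>
      MeasurableSet.iUnion fun _ => ?_
    have hm : Measurable fun p : (ℕ → EuclideanSpace ℝ (Fin d)) × EuclideanSpace ℝ (Fin d) =>
        dist p.2 (p.1 n) :=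
      measurable_snd.dist ((measurable_pi_apply n).comp measurable_fst)
    exact measurableSet_lt hm measurable_const
  have hprod : (P.prod (volume.restrict cube)) Gᶜ = 0 := by
    rw [Measure.prod_apply_symm hGmeas.compl]
    have hae : (fun x => P ((fun ω => (ω, x)) ⁻¹' Gᶜ)) =ᵐ[volume.restrict cube] 0 := by
      filter_upwards [ae_restrict_mem hcubeMeas] with x hx
      have hpre : (fun ω => (ω, x)) ⁻¹' Gᶜ = {ω | x ∈ E ω}ᶜ := rfl
      rw [hpre, Pi.zero_apply, measure_compl (hxEmeas x) (measure_ne_top _ _), hfull x hx]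
      simp
    rw [lintegral_congr_ae hae]; simp
  rw [Measure.measure_prod_null hGmeas.compl] at hprod
  filter_upwards [hprod] with ω hω
  have hpre : Prod.mk ω ⁻¹' Gᶜ = (E ω)ᶜ := rfl
  rw [hpre] at hω
  simp only [Pi.zero_apply] at hω
  rw [Measure.restrict_apply (hEmeasSet ω).compl] at hω
  have hdiff : cube \ E ω = (E ω)ᶜ ∩ cube := by rw [Set.diff_eq, Set.inter_comm]
  rw [hdiff]
  exact hω
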